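/- Let 0 < α̲ ≤ ᾱ < 2, let φ satisfy the weak scaling condition (WS), assume in addition that φ is a strictly increasing bijection of (0,∞) onto (0,∞) with inverse φ^{-1}, and let p > ᾱ be a real number. Then there exists a constant c > 0, depending only on p, ᾱ and C̄, such that for every s > 0, ∫_s^∞ [φ^{-1}(t)]^{-p} dt ≤ c · s · [φ^{-1}(s)]^{-p}. -/

import Mathlib

open MeasureTheory Real Filter Topology

/-- Under (WS), with `φ` a strictly increasing bijection of `(0,∞)` onto
itself with inverse `ψ = φ⁻¹`, for any real `p > α₁` there is `c' > 0` (depending only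
on `p, α₁, C`) such that for every `s > 0`,
`∫_s^∞ [φ⁻¹(t)]^{-p} dt ≤ c' s [φ⁻¹(s)]^{-p}`. -/
theorem stmt_13 (α₀ α₁ c C p : ℝ) (φ ψ : ℝ → ℝ)
    (hα₀ : 0 < α₀) (hαα : α₀ ≤ α₁) (hα₁ : α₁ < 2)
    (hc : 0 < c) (hc1 : c ≤ 1) (hC : 1 ≤ C)
    (hp : α₁ < p)
    (hφpos : ∀ r : ℝ, 0 < r → 0 < φ r)
    (hφmono : ∀ r R : ℝ, 0 < r → r ≤ R → φ r ≤ φ R)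
    (hWS : ∀ r R : ℝ, 0 < r → r ≤ R →
      c * (R / r) ^ α₀ ≤ φ R / φ r ∧ φ R / φ r ≤ C * (R / r) ^ α₁)
    (hφstrict : ∀ r R : ℝ, 0 < r → r < R → φ r < φ R)
    (hφsurj : ∀ t : ℝ, 0 < t → ∃ r : ℝ, 0 < r ∧ φ r = t)
    (hψ : ∀ t : ℝ, 0 < t → 0 < ψ t ∧ φ (ψ t) = t)
    (hψφ : ∀ r : ℝ, 0 < r → ψ (φ r) = r) :
    ∃ c' : ℝ, 0 < c' ∧ ∀ s : ℝ, 0 < s →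
      ∫⁻ t in Set.Ioi s, ENNReal.ofReal ((ψ t) ^ (-p)) ≤
        ENNReal.ofReal (c' * s * (ψ s) ^ (-p)) := by
  have hα₁pos : 0 < α₁ := lt_of_lt_of_le hα₀ hαα
  have hppos : 0 < p := hα₁pos.trans hp
  set q := p / α₁ with hqdef
  have hq1 : 1 < q := (one_lt_div hα₁pos).2 hp
  have hCpos : 0 < C := lt_of_lt_of_le one_pos hC
  refine ⟨C ^ q / (q - 1), div_pos (Real.rpow_pos_of_pos hCpos q) (by linarith), ?_⟩
  intro s hs
  obtain ⟨hr, hφr⟩ := hψ s hs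
  set r := ψ s with hrdef
  set K := r ^ (-p) * (C * s) ^ q with hK
  have hKnn : 0 ≤ K := by positivity
  -- pointwise bound
  have key : ∀ t ∈ Set.Ioi s, (ψ t) ^ (-p) ≤ K * t ^ (-q) := by
    intro t ht
    have hts : s < t := ht
    have htpos : 0 < t := hs.trans hts
    obtain ⟨hRpos, hφR⟩ := hψ t htpos
    set R := ψ t with hRdef
    have hrR : r ≤ R := by
      by_contra h
      push_neg at h
      have := hφstrict R r hRpos h
      rw [hφr, hφR] at this; linarith
    have h2 := (hWS r R hr hrR).2
    rw [hφR, hφr] at h2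
    have hx : (t / (C * s)) ^ (1 / α₁) ≤ R / r := by
      have h3 : t / (C * s) ≤ (R / r) ^ α₁ := by
        rw [div_le_iff₀ (by positivity)]
        have h2' : t ≤ C * (R / r) ^ α₁ * s := by
          rw [div_le_iff₀ hs] at h2; linarith
        nlinarith [h2']
      have h4 := Real.rpow_le_rpow (by positivity) h3 (by positivity : (0:ℝ) ≤ 1 / α₁)
      rwa [← Real.rpow_mul (by positivity), mul_one_div_cancel hα₁pos.ne',
        Real.rpow_one] at h4
    have hxpos : 0 < (t / (C * s)) ^ (1 / α₁) := by positivity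
    have hle : r * (t / (C * s)) ^ (1 / α₁) ≤ R := by
      rw [le_div_iff₀' hr] at hx
      exact hx
    have hbound : R ^ (-p) ≤ (r * (t / (C * s)) ^ (1 / α₁)) ^ (-p) :=
      Real.rpow_le_rpow_of_nonpos (by positivity) hle (by linarith)
    calc R ^ (-p) ≤ (r * (t / (C * s)) ^ (1 / α₁)) ^ (-p) := hbound
      _ = r ^ (-p) * ((t / (C * s)) ^ (1 / α₁)) ^ (-p) :=
          Real.mul_rpow hr.le hxpos.le
      _ = r ^ (-p) * (t / (C * s)) ^ (-q) := by
          rw [← Real.rpow_mul (by positivity)]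
          congr 1
          field_simp [hqdef]
          rw [hqdef]
      _ = K * t ^ (-q) := by
          rw [Real.div_rpow htpos.le (by positivity)]
          rw [hK, Real.rpow_neg htpos.le, Real.rpow_neg (by positivity : (0:ℝ) ≤ C * s)]
          field_simp
  -- integrability and value
  have hqlt : -q < -1 := by linarith
  have hint : IntegrableOn (fun t : ℝ => t ^ (-q)) (Set.Ioi s) :=
    integrableOn_Ioi_rpow_of_lt hqlt hs
  have hintK : Integrable (fun t : ℝ => K * t ^ (-q)) (volume.restrict (Set.Ioi s)) :=
    hint.const_mul K
  have hnn : 0 ≤ᵐ[volume.restrict (Set.Ioi s)] fun t : ℝ => K * t ^ (-q) := by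
    filter_upwards [ae_restrict_mem measurableSet_Ioi] with t ht
    have : 0 < t := hs.trans ht
    positivity
  have hval : ∫ t in Set.Ioi s, t ^ (-q) = s ^ (-q + 1) / (q - 1) := by
    rw [integral_Ioi_rpow_of_lt hqlt hs, show -q + 1 = -(q - 1) from by ring,
      div_neg, neg_div, neg_neg]
  calc ∫⁻ t in Set.Ioi s, ENNReal.ofReal ((ψ t) ^ (-p))
      ≤ ∫⁻ t in Set.Ioi s, ENNReal.ofReal (K * t ^ (-q)) := by
        refine lintegral_mono_ae ?_
        filter_upwards [ae_restrict_mem measurableSet_Ioi] with t ht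
        exact ENNReal.ofReal_le_ofReal (key t ht)
    _ = ENNReal.ofReal (∫ t in Set.Ioi s, K * t ^ (-q)) :=
        (ofReal_integral_eq_lintegral_ofReal hintK hnn).symm
    _ = ENNReal.ofReal (C ^ q / (q - 1) * s * r ^ (-p)) := by
        congr 1
        rw [integral_const_mul, hval, hK, Real.mul_rpow hCpos.le hs.le]
        have hsq : s ^ q * s ^ (-q + 1) = s := by
          rw [← Real.rpow_add hs]; norm_num
        linear_combination (C ^ q * r ^ (-p) / (q - 1)) * hsq
    _ ≤ ENNReal.ofReal (C ^ q / (q - 1) * s * (ψ s) ^ (-p)) := le_of_eq rfl
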